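/- For f(n) = (-1)^{n+1} and positive integers N, H, the modified Selberg integral J̃_f(N,H) := ∑_{N < x ≤ 2N} |∑_{|n-x| ≤ H} (1 - |n-x|/H) f(n)|² equals N/H² if H is odd and 0 if H is even. -/

import Mathlib

open Finset


lemma sumA (H : ℕ) : ∑ k ∈ Icc (-(H:ℤ)) H, (-1:ℝ)^k = (-1)^(H:ℕ) := by
  induction H with
  | zero => simp
  | succ H ih =>
    have hset : Icc (-((H:ℤ)+1)) ((H:ℤ)+1)
        = insert (-((H:ℤ)+1)) (insert ((H:ℤ)+1) (Icc (-(H:ℤ)) H)) := by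
      ext k; simp [Finset.mem_insert]; omega
    rw [show -((H+1:ℕ):ℤ) = -((H:ℤ)+1) by push_cast; ring,
        show ((H+1:ℕ):ℤ) = (H:ℤ)+1 by push_cast; ring, hset]
    rw [Finset.sum_insert (by simp; omega), Finset.sum_insert (by simp)]
    rw [ih]
    rw [zpow_neg, show ((H:ℤ)+1) = ((H+1:ℕ):ℤ) by push_cast; ring, zpow_natCast]
    rw [pow_succ]
    have : (-1:ℝ)^H = 1 ∨ (-1:ℝ)^H = -1 := by
      rcases Nat.even_or_odd H with h|h
      · exact Or.inl h.neg_one_pow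
      · exact Or.inr h.neg_one_pow
    rcases this with h|h <;> rw [h] <;> norm_num

lemma sumB (H : ℕ) : ∑ k ∈ Icc (-(H:ℤ)) H, ((H:ℝ) - ((|k| : ℤ):ℝ)) * (-1:ℝ)^k
    = if Odd H then 1 else 0 := by
  induction H with
  | zero => simp
  | succ H ih =>
    have hset : Icc (-((H:ℤ)+1)) ((H:ℤ)+1)
        = insert (-((H:ℤ)+1)) (insert ((H:ℤ)+1) (Icc (-(H:ℤ)) H)) := by
      ext k; simp [Finset.mem_insert]; omega
    rw [show -((H+1:ℕ):ℤ) = -((H:ℤ)+1) by push_cast; ring,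
        show ((H+1:ℕ):ℤ) = (H:ℤ)+1 by push_cast; ring, hset]
    rw [Finset.sum_insert (by simp; omega), Finset.sum_insert (by simp)]
    have e1 : (((H+1:ℕ):ℝ) - ((|(-((H:ℤ)+1))| : ℤ):ℝ)) = 0 := by
      rw [abs_neg, abs_of_nonneg (by positivity)]; push_cast; ring
    have e2 : (((H+1:ℕ):ℝ) - ((|((H:ℤ)+1)| : ℤ):ℝ)) = 0 := by
      rw [abs_of_nonneg (by positivity)]; push_cast; ring
    rw [e1, e2]
    have e3 : ∑ k ∈ Icc (-(H:ℤ)) H, (((H+1:ℕ):ℝ) - ((|k| : ℤ):ℝ)) * (-1:ℝ)^k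
        = (∑ k ∈ Icc (-(H:ℤ)) H, ((H:ℝ) - ((|k| : ℤ):ℝ)) * (-1:ℝ)^k)
          + ∑ k ∈ Icc (-(H:ℤ)) H, (-1:ℝ)^k := by
      rw [← Finset.sum_add_distrib]
      apply Finset.sum_congr rfl
      intro k _
      push_cast
      ring
    rw [e3, ih, sumA]
    rcases Nat.even_or_odd H with h|h
    · simp [h, Nat.odd_add_one, Nat.not_odd_iff_even.2 h, h.neg_one_pow]
    · simp [h, Nat.odd_add_one, Nat.not_even_iff_odd.2 h, h.neg_one_pow]

lemma eta_inner_sum (H : ℕ) (hH : 0 < H) (x : ℤ) :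
    ∑ n ∈ Icc (x - H) (x + H), (1 - ((|n - x| : ℤ):ℝ)/(H:ℝ)) * (-1:ℝ)^(n+1)
    = (-1:ℝ)^(x+1) * (if Odd H then 1 else 0) / H := by
  have hmap : Icc (x - (H:ℤ)) (x + H)
      = Finset.map (addLeftEmbedding x) (Icc (-(H:ℤ)) H) := by
    rw [Finset.map_add_left_Icc, sub_eq_add_neg]
  rw [hmap, Finset.sum_map]
  simp only [addLeftEmbedding_apply]
  have key : ∀ k ∈ Icc (-(H:ℤ)) H,
      (1 - ((|x + k - x| : ℤ):ℝ)/(H:ℝ)) * (-1:ℝ)^(x + k + 1)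
      = ((-1:ℝ)^(x+1) / H) * (((H:ℝ) - ((|k|:ℤ):ℝ)) * (-1:ℝ)^k) := by
    intro k _
    have h1 : x + k - x = k := by ring
    rw [h1]
    have h2 : (-1:ℝ)^(x + k + 1) = (-1:ℝ)^(x+1) * (-1:ℝ)^k := by
      rw [← zpow_add₀ (by norm_num : (-1:ℝ) ≠ 0)]; congr 1; ring
    rw [h2]
    have h : (H:ℝ) ≠ 0 := Nat.cast_ne_zero.2 hH.ne'
    field_simp
  rw [Finset.sum_congr rfl key, ← Finset.mul_sum, sumB]
  ring




/-- For `f(n) = (-1)^(n+1)`, the modified Selberg integral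
`∑_{N < x ≤ 2N} |∑_{|n-x| ≤ H} (1 - |n-x|/H) f(n)|²` equals `N/H²` if `H` is odd
and `0` if `H` is even. -/
theorem modified_selberg_integral_of_eta (N H : ℕ) (hN : 0 < N) (hH : 0 < H) :
    ∑ x ∈ Finset.Icc ((N : ℤ) + 1) (2 * N),
      (∑ n ∈ Finset.Icc (x - H) (x + H),
        (1 - ((|n - x| : ℤ) : ℝ) / (H : ℝ)) * ((-1 : ℝ))^(n + 1))^2
    = if Odd H then (N : ℝ) / (H : ℝ)^2 else 0 := by
  have hsq : ∀ x : ℤ, ((-1:ℝ)^(x+1))^2 = 1 := by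
    intro x
    rw [← zpow_natCast ((-1:ℝ)^(x+1)) 2, ← zpow_mul, mul_comm, zpow_mul]
    norm_num
  have hterm : ∀ x ∈ Finset.Icc ((N:ℤ)+1) (2*N),
      (∑ n ∈ Finset.Icc (x - H) (x + H),
        (1 - ((|n - x| : ℤ) : ℝ) / (H : ℝ)) * ((-1 : ℝ))^(n + 1))^2
      = (if Odd H then 1 else 0) / (H:ℝ)^2 := by
    intro x _
    rw [eta_inner_sum H hH, div_pow, mul_pow, hsq, one_mul]
    by_cases h : Odd H <;> simp [h]
  rw [Finset.sum_congr rfl hterm, Finset.sum_const]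
  have hcard : (Finset.Icc ((N:ℤ)+1) (2*N)).card = N := by
    rw [Int.card_Icc]; omega
  rw [hcard]
  by_cases h : Odd H <;> simp [h] <;> ring
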